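/- Let L₁ be a finite list of distinct locations with bit-valued tags t : L₁ → {0,1} summing to 1, L₂ a finite list of distinct locations with bit-valued tags t' : L₂ → {0,1} summing to 1, and c ∈ {0,1}. Define L₃ = L₁ ∪ L₂ and for ℓ ∈ L₃ define t''(ℓ) = c·t'(ℓ) + (1−c)·t(ℓ) if ℓ ∈ L₁ ∩ L₂, t''(ℓ) = (1−c)·t(ℓ) if ℓ ∈ L₁ \ L₂, and t''(ℓ) = c·t'(ℓ) if ℓ ∈ L₂ \ L₁. Then t'' is bit-valued and the sum of t'' over L₃ equals 1. -/
import Mathlib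


theorem condassign_preserves_one_hot {α : Type*} [DecidableEq α]
    (L₁ L₂ : Finset α) (t t' : α → ℤ) (c : ℤ)
    (ht : ∀ ℓ ∈ L₁, t ℓ = 0 ∨ t ℓ = 1)
    (ht' : ∀ ℓ ∈ L₂, t' ℓ = 0 ∨ t' ℓ = 1)
    (hsum : ∑ ℓ ∈ L₁, t ℓ = 1)
    (hsum' : ∑ ℓ ∈ L₂, t' ℓ = 1)
    (hc : c = 0 ∨ c = 1)
    (t'' : α → ℤ)
    (ht'' : ∀ ℓ ∈ L₁ ∪ L₂,
      t'' ℓ = if ℓ ∈ L₁ ∧ ℓ ∈ L₂ then c * t' ℓ + (1 - c) * t ℓ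
              else if ℓ ∈ L₁ then (1 - c) * t ℓ
              else c * t' ℓ) :
    (∀ ℓ ∈ L₁ ∪ L₂, t'' ℓ = 0 ∨ t'' ℓ = 1) ∧ ∑ ℓ ∈ L₁ ∪ L₂, t'' ℓ = 1 := by
  rcases hc with rfl | rfl
  · have key : ∀ ℓ ∈ L₁ ∪ L₂, t'' ℓ = if ℓ ∈ L₁ then t ℓ else 0 := by
      intro ℓ hℓ
      rw [ht'' ℓ hℓ]
      by_cases h1 : ℓ ∈ L₁ <;> by_cases h2 : ℓ ∈ L₂ <;> simp [h1, h2]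
    constructor
    · intro ℓ hℓ
      rw [key ℓ hℓ]
      by_cases h1 : ℓ ∈ L₁
      · simpa [h1] using ht ℓ h1
      · simp [h1]
    · rw [Finset.sum_congr rfl key, Finset.sum_ite_mem,
        Finset.union_inter_cancel_left, hsum]
  · have key : ∀ ℓ ∈ L₁ ∪ L₂, t'' ℓ = if ℓ ∈ L₂ then t' ℓ else 0 := by
      intro ℓ hℓ
      rw [ht'' ℓ hℓ]
      by_cases h1 : ℓ ∈ L₁ <;> by_cases h2 : ℓ ∈ L₂ <;>
        simp_all [Finset.mem_union]
    constructor
    · intro ℓ hℓ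
      rw [key ℓ hℓ]
      by_cases h2 : ℓ ∈ L₂
      · simpa [h2] using ht' ℓ h2
      · simp [h2]
    · rw [Finset.sum_congr rfl key, Finset.sum_ite_mem,
        Finset.union_inter_cancel_right, hsum']
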